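/- Fix u ∈ (0,1) and r = (1−u)²/(4u). Let ξ_x have distribution μ(r,x). Then E(ξ_x)/x → 1/(1+u) as x → ∞. -/

import Mathlib

open Filter

/-- `h x` is the smallest integer `y` with `2 * y ≥ x` (the upper half of `x`). -/
def upperHalf (x : ℕ) : ℕ := (x + 1) / 2

noncomputable def rho (u : ℝ) : ℝ := (1 - u) ^ 2 / (4 * u)

/-- `A(r,x) = Σ_y y·C(2y,y)·C(y,x−y)·r^y`. -/
noncomputable def A (r : ℝ) (x : ℕ) : ℝ :=
  ∑ y ∈ Finset.Icc (upperHalf x) x,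
    (y : ℝ) * (Nat.choose (2 * y) y : ℝ) * (Nat.choose y (x - y) : ℝ) * r ^ y

/-- `B(r,x) = Σ_y C(2y,y)·C(y,x−y)·r^y`. -/
noncomputable def B (r : ℝ) (x : ℕ) : ℝ :=
  ∑ y ∈ Finset.Icc (upperHalf x) x,
    (Nat.choose (2 * y) y : ℝ) * (Nat.choose y (x - y) : ℝ) * r ^ y

set_option maxHeartbeats 2000000

noncomputable def Tt (r : ℝ) (x y : ℕ) : ℝ :=
  (Nat.choose (2 * y) y : ℝ) * (Nat.choose y (x - y) : ℝ) * r ^ y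

lemma Tt_nonneg {r : ℝ} (hr : 0 ≤ r) (x y : ℕ) : 0 ≤ Tt r x y := by
  unfold Tt; positivity


lemma ratio_id (a b : ℕ) :
    ((b:ℝ)+2) * ((b:ℝ)+1) * ((2*(a+1+b)+2).choose (a+1+b+1) : ℝ) * ((a+1+b+1).choose a : ℝ)
    = 2*(2*((a:ℝ)+1+b)+1) * ((a:ℝ)+1) * ((2*(a+1+b)).choose (a+1+b) : ℝ) * ((a+1+b).choose (a+1) : ℝ) := by
  have h1 : a + 1 + b + 1 ≤ 2*(a+1+b)+2 := by omega
  have h2 : a ≤ a + 1 + b + 1 := by omega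
  have h3 : a + 1 + b ≤ 2*(a+1+b) := by omega
  have h4 : a + 1 ≤ a + 1 + b := by omega
  rw [Nat.cast_choose ℝ h1, Nat.cast_choose ℝ h2, Nat.cast_choose ℝ h3, Nat.cast_choose ℝ h4]
  have e1 : 2*(a+1+b)+2 - (a+1+b+1) = a+1+b+1 := by omega
  have e2 : a+1+b+1 - a = b+2 := by omega
  have e3 : 2*(a+1+b) - (a+1+b) = a+1+b := by omega
  have e4 : a+1+b - (a+1) = b := by omega
  rw [e1, e2, e3, e4]
  have f1 : (Nat.factorial (2*(a+1+b)+2) : ℝ)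
      = (2*((a:ℝ)+1+b)+2) * ((2*((a:ℝ)+1+b)+1) * (Nat.factorial (2*(a+1+b)) : ℝ)) := by
    rw [Nat.factorial_succ (2*(a+1+b)+1), Nat.factorial_succ (2*(a+1+b))]; push_cast; ring
  have f2 : (Nat.factorial (a+1+b+1) : ℝ) = ((a:ℝ)+1+b+1) * (Nat.factorial (a+1+b) : ℝ) := by
    rw [Nat.factorial_succ]; push_cast; ring
  have f3 : (Nat.factorial (b+2) : ℝ) = ((b:ℝ)+2) * (((b:ℝ)+1) * (Nat.factorial b : ℝ)) := by
    rw [Nat.factorial_succ (b+1), Nat.factorial_succ b]; push_cast; ring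
  have f4 : (Nat.factorial (a+1) : ℝ) = ((a:ℝ)+1) * (Nat.factorial a : ℝ) := by
    rw [Nat.factorial_succ]; push_cast; ring
  rw [f1, f2, f3, f4]
  have p1 : (Nat.factorial (2*(a+1+b)) : ℝ) ≠ 0 := by positivity
  have p2 : (Nat.factorial (a+1+b) : ℝ) ≠ 0 := by positivity
  have p3 : (Nat.factorial a : ℝ) ≠ 0 := by positivity
  have p4 : (Nat.factorial b : ℝ) ≠ 0 := by positivity
  have q1 : ((a:ℝ)+1+b+1) ≠ 0 := by positivity
  field_simp

lemma T_step (r : ℝ) {x y : ℕ} (h2 : x ≤ 2*y) (hyx : y < x) :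
    Tt r x (y+1) * (((2*y+2-x : ℕ) : ℝ) * ((2*y+1-x : ℕ) : ℝ))
    = Tt r x y * (2*r*(2*(y:ℝ)+1) * (((x-y : ℕ)) : ℝ)) := by
  obtain ⟨a, b, hy, hx⟩ : ∃ a b, y = a + 1 + b ∧ x = 2*a + b + 2 := ⟨x - y - 1, 2*y - x, by omega, by omega⟩
  subst hy; subst hx
  have e1 : 2*(a+1+b)+2 - (2*a+b+2) = b + 2 := by omega
  have e2 : 2*(a+1+b)+1 - (2*a+b+2) = b + 1 := by omega
  have e3 : 2*a+b+2 - (a+1+b) = a + 1 := by omega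
  have e4 : 2*a+b+2 - (a+1+b+1) = a := by omega
  unfold Tt
  rw [e1, e2, e3, e4]
  have e5 : 2*(a+1+b+1) = 2*(a+1+b)+2 := by ring
  rw [e5]
  push_cast
  have := ratio_id a b
  have hp : r ^ (a+1+b+1) = r ^ (a+1+b) * r := by ring
  rw [hp]
  linear_combination (r ^ (a+1+b) * r) * this


lemma chain_up {f : ℕ → ℝ} {q : ℝ} (hq : 0 ≤ q) {m x : ℕ}
    (step : ∀ z, m ≤ z → z < x → f (z+1) ≤ q * f z) :
    ∀ k, m + k ≤ x → f (m+k) ≤ q^k * f m := by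
  intro k
  induction k with
  | zero => intro _; simp
  | succ n ih =>
    intro h
    have h1 : m + n ≤ x := by omega
    have := step (m+n) (by omega) (by omega)
    calc f (m+(n+1)) = f ((m+n)+1) := by ring_nf
      _ ≤ q * f (m+n) := this
      _ ≤ q * (q^n * f m) := by
          exact mul_le_mul_of_nonneg_left (ih h1) hq
      _ = q^(n+1) * f m := by ring

lemma chain_down {f : ℕ → ℝ} {q : ℝ} (hq : 0 ≤ q) {l m : ℕ}
    (step : ∀ z, l ≤ z → z+1 ≤ m → f z ≤ q * f (z+1)) :
    ∀ k, l + k ≤ m → f (m-k) ≤ q^k * f m := by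
  intro k
  induction k with
  | zero => intro _; simp
  | succ n ih =>
    intro h
    have h1 : l + n ≤ m := by omega
    have hz : m - (n+1) + 1 = m - n := by omega
    have := step (m-(n+1)) (by omega) (by omega)
    rw [hz] at this
    calc f (m-(n+1)) ≤ q * f (m-n) := this
      _ ≤ q * (q^n * f m) := mul_le_mul_of_nonneg_left (ih h1) hq
      _ = q^(n+1) * f m := by ring

lemma exists_q_up {r c₀ θ : ℝ} (hr : 0 < r) (hc0 : 0 < c₀) (hc1 : c₀ < 1)
    (key : r * (1 - c₀^2) = c₀^2) (hθ : 2*θ - 1 = c₀) (ε : ℝ) (hε : 0 < ε) :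
    ∃ q : ℝ, 0 < q ∧ q < 1 ∧ ∀ᶠ x : ℕ in atTop, ∀ y : ℕ,
      x ≤ 2*y → y < x → (θ + ε/2) * x ≤ y → Tt r x (y+1) ≤ q * Tt r x y := by
  set c : ℝ := c₀ + ε with hc
  have hcpos : 0 < c := by positivity
  have hcc : c₀^2 < c^2 := by
    have h1 := mul_lt_mul_of_pos_right (show c₀ < c by simp only [hc]; linarith) hc0
    have h2 := mul_lt_mul_of_pos_left (show c₀ < c by simp only [hc]; linarith) hcpos
    nlinarith [h1, h2]
  have hq01 : r * (1 - c^2) / c^2 < 1 := by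
    rw [div_lt_one (by positivity)]
    have := mul_lt_mul_of_pos_left hcc hr
    linarith
  set q₀ : ℝ := r * (1 - c^2) / c^2 with hq₀
  set q : ℝ := (max q₀ 0 + 1) / 2 with hq
  have hq0 : 0 < q := by
    have := le_max_right q₀ 0; simp only [hq]; linarith
  have hq1 : q < 1 := by
    have h1 : max q₀ 0 < 1 := max_lt hq01 one_pos
    simp only [hq]; linarith
  have hqq : (1 - q₀)/2 ≤ q - q₀ := by
    have := le_max_left q₀ 0; simp only [hq]; linarith
  have hqq0 : 0 < q - q₀ := lt_of_lt_of_le (by linarith) hqq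
  have hK : 0 < (q - q₀) * c^2 := by positivity
  have hq₀c : q₀ * c^2 = r * (1 - c^2) := by
    rw [hq₀, div_mul_cancel₀ _ (pow_pos hcpos 2).ne']
  refine ⟨q, hq0, hq1, ?_⟩
  have hev : ∀ᶠ x : ℕ in atTop, r ≤ ((q - q₀) * c^2) * x := by
    have ht : Tendsto (fun x : ℕ => ((q - q₀) * c^2) * x) atTop atTop :=
      (tendsto_natCast_atTop_atTop).const_mul_atTop hK
    exact ht.eventually_ge_atTop r
  filter_upwards [hev] with x hx
  intro y h2 hyx hθy
  have hXY : (y:ℝ) < x := by exact_mod_cast hyx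
  have hX2Y : (x:ℝ) ≤ 2*y := by exact_mod_cast h2
  have hX1 : (1:ℝ) ≤ x := by
    have : 1 ≤ x := by omega
    exact_mod_cast this
  have hcx : (2*θ - 1)*(x:ℝ) = c₀*(x:ℝ) := by rw [hθ]
  have hεx : (0:ℝ) ≤ ε*(x:ℝ) := by positivity
  have hs : c * x ≤ 2*(y:ℝ) - x := by
    simp only [hc]; linarith [hcx, hθy]
  have hs0 : (0:ℝ) ≤ 2*(y:ℝ) - x := by
    have : (0:ℝ) ≤ c * x := by positivity
    linarith [hs]
  have hs2 : (c*x)*(c*x) ≤ (2*(y:ℝ)-x)*(2*(y:ℝ)-x) :=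
    mul_self_le_mul_self (by positivity) hs
  have main : 2*r*(2*(y:ℝ)+1)*((x:ℝ) - y) ≤ q * ((2*(y:ℝ)+2-x) * (2*(y:ℝ)+1-x)) := by
    have A1 : 2*r*(2*(y:ℝ)+1)*((x:ℝ)-y) + r*(2*(y:ℝ)-x)
        = r*(x:ℝ)^2 - r*(2*(y:ℝ)-x)^2 + r*x := by ring
    have A2 : (0:ℝ) ≤ r*(2*(y:ℝ)-x) := mul_nonneg hr.le hs0
    have A3 : r*(x:ℝ) ≤ (q-q₀)*c^2*(x:ℝ)^2 := by
      have h := mul_le_mul_of_nonneg_right hx (by positivity : (0:ℝ) ≤ (x:ℝ))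
      nlinarith [h]
    have A4 : (q+r)*((c*x)*(c*x)) ≤ (q+r)*((2*(y:ℝ)-x)*(2*(y:ℝ)-x)) :=
      mul_le_mul_of_nonneg_left hs2 (by positivity)
    have A5 : (q+r)*((c*(x:ℝ))*(c*x)) = r*(x:ℝ)^2 + (q-q₀)*c^2*(x:ℝ)^2 := by
      linear_combination (x:ℝ)^2 * hq₀c
    have A6 : q*((2*(y:ℝ)-x)*(2*(y:ℝ)-x)) + q*(3*(2*(y:ℝ)-x)+2)
        = q*((2*(y:ℝ)+2-x)*(2*(y:ℝ)+1-x)) := by ring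
    have A7 : (0:ℝ) ≤ q*(3*(2*(y:ℝ)-x)+2) := mul_nonneg hq0.le (by linarith)
    linarith [A1, A2, A3, A4, A5, A6, A7]
  have hid := T_step r h2 hyx
  have d1 : ((2*y+2-x : ℕ) : ℝ) = 2*(y:ℝ)+2-x := by
    have : x ≤ 2*y+2 := by omega
    push_cast [Nat.cast_sub this]; ring
  have d2 : ((2*y+1-x : ℕ) : ℝ) = 2*(y:ℝ)+1-x := by
    have : x ≤ 2*y+1 := by omega
    push_cast [Nat.cast_sub this]; ring
  have d3 : ((x-y : ℕ) : ℝ) = (x:ℝ)-y := by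
    push_cast [Nat.cast_sub hyx.le]; ring
  rw [d1, d2, d3] at hid
  have hP : (0:ℝ) < (2*(y:ℝ)+2-x) * (2*(y:ℝ)+1-x) :=
    mul_pos (by linarith) (by linarith)
  have hTy := Tt_nonneg hr.le x y
  have hfin : Tt r x (y+1) * ((2*(y:ℝ)+2-x) * (2*(y:ℝ)+1-x))
      ≤ (q * Tt r x y) * ((2*(y:ℝ)+2-x) * (2*(y:ℝ)+1-x)) := by
    rw [hid]
    calc Tt r x y * (2*r*(2*(y:ℝ)+1) * ((x:ℝ)-y))
        ≤ Tt r x y * (q * ((2*(y:ℝ)+2-x) * (2*(y:ℝ)+1-x))) :=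
          mul_le_mul_of_nonneg_left main hTy
      _ = (q * Tt r x y) * ((2*(y:ℝ)+2-x) * (2*(y:ℝ)+1-x)) := by ring
  exact le_of_mul_le_mul_right hfin hP

lemma exists_q_down {r c₀ θ : ℝ} (hr : 0 < r) (hc0 : 0 < c₀) (hc1 : c₀ < 1)
    (key : r * (1 - c₀^2) = c₀^2) (hθ : 2*θ - 1 = c₀) (ε : ℝ) (hε : 0 < ε) (hεc : ε < c₀) :
    ∃ q : ℝ, 0 < q ∧ q < 1 ∧ ∀ᶠ x : ℕ in atTop, ∀ y : ℕ,
      x ≤ 2*y → (y:ℝ) < (θ - ε/2) * x → Tt r x y ≤ q * Tt r x (y+1) := by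
  set c : ℝ := c₀ - ε with hc
  have hcpos : 0 < c := by simp only [hc]; linarith
  have hcc : c^2 < c₀^2 := by
    have h1 := mul_lt_mul_of_pos_right hεc hε
    have h2 := mul_nonneg hc0.le hε.le
    simp only [hc]; nlinarith [h1, h2]
  have hc2 : c^2 < 1 := by
    have h3 := mul_pos (show (0:ℝ) < 1 - c₀ by linarith) (show (0:ℝ) < 1 + c₀ by linarith)
    nlinarith [hcc, h3]
  have hrc : 0 < r * (1 - c^2) := by
    apply mul_pos hr; linarith
  have hq01 : c^2 / (r * (1 - c^2)) < 1 := by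
    rw [div_lt_one hrc]
    have h := mul_lt_mul_of_pos_left hcc hr
    linarith [h, key, hcc]
  obtain ⟨q₀, hq₀c, hq00, hq01'⟩ :
      ∃ q₀ : ℝ, q₀ * (r * (1 - c^2)) = c^2 ∧ 0 < q₀ ∧ q₀ < 1 := by
    refine ⟨c^2 / (r * (1 - c^2)), div_mul_cancel₀ _ hrc.ne', by positivity, hq01⟩
  clear hq01
  have hq01 := hq01'
  set q : ℝ := (q₀ + 1) / 2 with hq
  have hq0 : 0 < q := by simp only [hq]; linarith
  have hq1 : q < 1 := by simp only [hq]; linarith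
  set Δ : ℝ := (q - q₀) * (r * (1 - c^2)) with hΔ
  have hΔ0 : 0 < Δ := by
    apply mul_pos _ hrc; simp only [hq]; linarith
  refine ⟨q, hq0, hq1, ?_⟩
  have hev : ∀ᶠ x : ℕ in atTop, (4*c+4)/Δ ≤ (x:ℝ) :=
    tendsto_natCast_atTop_atTop.eventually_ge_atTop _
  filter_upwards [hev, eventually_ge_atTop 1] with x hx hx1
  intro y h2 hyθ
  have hX1 : (1:ℝ) ≤ x := by exact_mod_cast hx1
  have hθ1 : θ < 1 := by linarith
  have hyX : (y:ℝ) < x := by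
    have h := mul_le_mul_of_nonneg_right (show θ - ε/2 ≤ 1 by linarith) (by positivity : (0:ℝ) ≤ (x:ℝ))
    linarith [h, hyθ]
  have hyx : y < x := by exact_mod_cast hyX
  have hX2Y : (x:ℝ) ≤ 2*y := by exact_mod_cast h2
  have hs0 : (0:ℝ) ≤ 2*(y:ℝ) - x := by linarith
  have hcx : (2*θ - 1)*(x:ℝ) = c₀*(x:ℝ) := by rw [hθ]
  have hsc : 2*(y:ℝ) - x < c * x := by
    simp only [hc]; linarith [hcx, hyθ]
  have hquad : 4*c*(x:ℝ) + 4 ≤ Δ*(x:ℝ)^2 := by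
    have h1 : (4*c+4) ≤ Δ*(x:ℝ) := by
      rw [div_le_iff₀ hΔ0] at hx; linarith [mul_comm Δ (x:ℝ)]
    have h2 := mul_le_mul_of_nonneg_right h1 (by positivity : (0:ℝ) ≤ (x:ℝ))
    nlinarith [h2, hX1]
  have main : (2*(y:ℝ)+2-x) * (2*(y:ℝ)+1-x) ≤ q * (2*r*(2*(y:ℝ)+1)*((x:ℝ) - y)) := by
    have hs2 : (2*(y:ℝ)-x)*(2*(y:ℝ)-x) ≤ (c*x)*(c*x) :=
      mul_self_le_mul_self hs0 hsc.le
    have B1 : (2*(y:ℝ)+2-x) * (2*(y:ℝ)+1-x) ≤ ((2*(y:ℝ)-x)+2)^2 := by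
      nlinarith [hs0]
    have B2 : ((2*(y:ℝ)-x)+2)^2 ≤ (c*x+2)^2 := by
      have h := mul_self_le_mul_self (show (0:ℝ) ≤ 2*(y:ℝ)-x+2 by linarith)
        (show 2*(y:ℝ)-x+2 ≤ c*x+2 by linarith [hsc])
      nlinarith [h]
    have B3 : (c*(x:ℝ)+2)^2 = c^2*(x:ℝ)^2 + (4*c*x + 4) := by ring
    have B4 : c^2*(x:ℝ)^2 + Δ*(x:ℝ)^2 = q*(r*(1-c^2))*(x:ℝ)^2 := by
      linear_combination (-(x:ℝ)^2) * hq₀c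
    have B5 : q*(r*(1-c^2))*(x:ℝ)^2 ≤ q*r*((x:ℝ)^2 - (2*(y:ℝ)-x)^2) := by
      have h : (2*(y:ℝ)-x)^2 ≤ c^2*(x:ℝ)^2 := by nlinarith [hs2]
      have h5 := mul_le_mul_of_nonneg_left h (by positivity : (0:ℝ) ≤ q*r)
      nlinarith [h5]
    have B6 : q*r*((x:ℝ)^2 - (2*(y:ℝ)-x)^2) ≤ q * (2*r*(2*(y:ℝ)+1)*((x:ℝ) - y)) := by
      have e : 2*r*(2*(y:ℝ)+1)*((x:ℝ)-y) = r*((x:ℝ)^2 - (2*(y:ℝ)-x)^2) + r*((x:ℝ) - (2*(y:ℝ)-x)) := by ring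
      have h7 : (0:ℝ) ≤ r*((x:ℝ) - (2*(y:ℝ)-x)) := by
        apply mul_nonneg hr.le; linarith
      have e' : q*(2*r*(2*(y:ℝ)+1)*((x:ℝ) - y))
          = q*(r*((x:ℝ)^2 - (2*(y:ℝ)-x)^2)) + q*(r*((x:ℝ) - (2*(y:ℝ)-x))) := by ring
      linarith [e', mul_nonneg hq0.le h7]
    linarith [B1, B2, B3, B4, B5, B6, hquad]
  have hid := T_step r h2 hyx
  have d1 : ((2*y+2-x : ℕ) : ℝ) = 2*(y:ℝ)+2-x := by
    have : x ≤ 2*y+2 := by omega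
    push_cast [Nat.cast_sub this]; ring
  have d2 : ((2*y+1-x : ℕ) : ℝ) = 2*(y:ℝ)+1-x := by
    have : x ≤ 2*y+1 := by omega
    push_cast [Nat.cast_sub this]; ring
  have d3 : ((x-y : ℕ) : ℝ) = (x:ℝ)-y := by
    push_cast [Nat.cast_sub hyx.le]; ring
  rw [d1, d2, d3] at hid
  have hM : (0:ℝ) < 2*r*(2*(y:ℝ)+1)*((x:ℝ)-y) := by
    apply mul_pos (mul_pos (by linarith : (0:ℝ) < 2*r) (by positivity : (0:ℝ) < 2*(y:ℝ)+1))
    linarith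
  have hTy1 := Tt_nonneg hr.le x (y+1)
  have hfin : Tt r x y * (2*r*(2*(y:ℝ)+1)*((x:ℝ)-y))
      ≤ (q * Tt r x (y+1)) * (2*r*(2*(y:ℝ)+1)*((x:ℝ)-y)) := by
    rw [← hid]
    calc Tt r x (y+1) * ((2*(y:ℝ)+2-x) * (2*(y:ℝ)+1-x))
        ≤ Tt r x (y+1) * (q * (2*r*(2*(y:ℝ)+1)*((x:ℝ)-y))) :=
          mul_le_mul_of_nonneg_left main hTy1
      _ = (q * Tt r x (y+1)) * (2*r*(2*(y:ℝ)+1)*((x:ℝ)-y)) := by ring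
  exact le_of_mul_le_mul_right hfin hM


lemma tendsto_tail_aux {q ε : ℝ} (hq0 : 0 < q) (hq1 : q < 1) (hε : 0 < ε) :
    Tendsto (fun x : ℕ => ((x:ℝ)+1) * q ^ (⌊ε * x / 2⌋₊ - 1)) atTop (nhds 0) := by
  set Q : ℝ := q ^ (ε/2 : ℝ) with hQ
  have hQ0 : 0 < Q := Real.rpow_pos_of_pos hq0 _
  have hQ1 : Q < 1 := Real.rpow_lt_one hq0.le hq1 (by positivity)
  have hlim : Tendsto (fun x : ℕ => q^(-2 : ℝ) * (((x:ℝ) * Q ^ x) + Q ^ x)) atTop (nhds 0) := by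
    have h1 := tendsto_self_mul_const_pow_of_lt_one hQ0.le hQ1
    have h2 := tendsto_pow_atTop_nhds_zero_of_lt_one hQ0.le hQ1
    have := (h1.add h2).const_mul (q^(-2:ℝ))
    simpa using this
  apply squeeze_zero' ?_ ?_ hlim
  · filter_upwards with x
    positivity
  · have hev : ∀ᶠ x : ℕ in atTop, (4:ℝ)/ε ≤ (x:ℝ) :=
      tendsto_natCast_atTop_atTop.eventually_ge_atTop _
    filter_upwards [hev] with x hx
    have hx0 : (0:ℝ) ≤ ε * x / 2 := by positivity
    have h4 : (2:ℝ) ≤ ε * x / 2 := by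
      rw [div_le_iff₀ hε] at hx
      linarith
    have hD1 : 1 ≤ ⌊ε * x / 2⌋₊ := by
      exact (Nat.one_le_floor_iff _).mpr (by linarith)
    have hcast : ((⌊ε * x / 2⌋₊ - 1 : ℕ) : ℝ) = (⌊ε * x / 2⌋₊ : ℝ) - 1 := by
      push_cast [Nat.cast_sub hD1]; ring
    have hge : ε * x / 2 - 2 ≤ ((⌊ε * x / 2⌋₊ - 1 : ℕ) : ℝ) := by
      rw [hcast]
      have := Nat.lt_floor_add_one (ε * x / 2)
      linarith
    have key : q ^ (⌊ε * x / 2⌋₊ - 1) ≤ q^(-2:ℝ) * Q ^ x := by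
      have e1 : q ^ (⌊ε * x / 2⌋₊ - 1) = q ^ (((⌊ε * x / 2⌋₊ - 1 : ℕ):ℝ)) :=
        (Real.rpow_natCast q _).symm
      have e2 : q ^ (((⌊ε * x / 2⌋₊ - 1 : ℕ):ℝ)) ≤ q ^ (ε * x / 2 - 2) :=
        Real.rpow_le_rpow_of_exponent_ge hq0 hq1.le hge
      have e3 : q ^ (ε * x / 2 - 2) = q^(-2:ℝ) * Q ^ x := by
        rw [hQ, ← Real.rpow_natCast (q ^ (ε/2:ℝ)) x, ← Real.rpow_mul hq0.le,
          ← Real.rpow_add hq0]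
        ring_nf
      rw [e1]
      exact e2.trans (le_of_eq e3)
    calc ((x:ℝ)+1) * q ^ (⌊ε * x / 2⌋₊ - 1) ≤ ((x:ℝ)+1) * (q^(-2:ℝ) * Q ^ x) := by
          apply mul_le_mul_of_nonneg_left key (by positivity)
      _ = q^(-2:ℝ) * (((x:ℝ) * Q ^ x) + Q ^ x) := by ring

lemma main_est {u : ℝ} (hu : u ∈ Set.Ioo (0 : ℝ) 1) {ε : ℝ} (hε : 0 < ε)
    (hεc : ε < (1-u)/(1+u)) :
    ∀ᶠ x : ℕ in atTop, |A (rho u) x / ((x:ℝ) * B (rho u) x) - 1/(1+u)| ≤ 2*ε := by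
  classical
  obtain ⟨hu0, hu1⟩ := hu
  set r : ℝ := rho u with hrdef
  set θ : ℝ := 1/(1+u) with hθdef
  set c₀ : ℝ := (1-u)/(1+u) with hc₀def
  have h1u : (0:ℝ) < 1 + u := by linarith
  have hr : 0 < r := by
    rw [hrdef]; unfold rho
    exact div_pos (pow_pos (by linarith) 2) (by linarith)
  have hc0 : 0 < c₀ := by rw [hc₀def]; exact div_pos (by linarith) h1u
  have hc1 : c₀ < 1 := by rw [hc₀def, div_lt_one h1u]; linarith
  have key : r * (1 - c₀^2) = c₀^2 := by
    rw [hrdef, hc₀def]; unfold rho; field_simp; ring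
  have hθc : 2*θ - 1 = c₀ := by rw [hθdef, hc₀def]; field_simp; ring
  have hθhalf : 1/2 < θ := by rw [hθdef, lt_div_iff₀ h1u]; linarith
  have hθ1 : θ < 1 := by rw [hθdef, div_lt_one h1u]; linarith
  obtain ⟨qu, hqu0, hqu1, hUp⟩ := exists_q_up hr hc0 hc1 key hθc ε hε
  obtain ⟨qd, hqd0, hqd1, hDn⟩ := exists_q_down hr hc0 hc1 key hθc ε hε hεc
  set qm : ℝ := max qu qd with hqm
  have hqm0 : 0 < qm := lt_of_lt_of_le hqu0 (le_max_left _ _)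
  have hqm1 : qm < 1 := max_lt hqu1 hqd1
  have htiny : ∀ᶠ x : ℕ in atTop, ((x:ℝ)+1) * qm ^ (⌊ε * x / 2⌋₊ - 1) ≤ ε/2 :=
    (tendsto_tail_aux hqm0 hqm1 hε).eventually (eventually_le_nhds (by positivity))
  filter_upwards [hUp, hDn, htiny, eventually_ge_atTop 1] with x hUpx hDnx htx hx1
  set S : Finset ℕ := Finset.Icc (upperHalf x) x with hS
  set D : ℕ := ⌊ε * x / 2⌋₊ with hD
  have hX1 : (1:ℝ) ≤ x := by exact_mod_cast hx1
  have hx0R : (0:ℝ) < x := by linarith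
  have hεx : (0:ℝ) ≤ ε*(x:ℝ) := by positivity
  have hθx2 := mul_lt_mul_of_pos_right hθhalf hx0R
  have hθx1 : θ*(x:ℝ) ≤ (x:ℝ) := by
    have := mul_le_mul_of_nonneg_right hθ1.le (le_of_lt hx0R)
    linarith
  have hθx0 : (0:ℝ) ≤ θ*(x:ℝ) := by positivity
  have hTnn : ∀ y, 0 ≤ Tt r x y := fun y => Tt_nonneg hr.le x y
  have hBsum : B r x = ∑ y ∈ S, Tt r x y := rfl
  have hAsum : A r x = ∑ y ∈ S, (y:ℝ) * Tt r x y :=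
    Finset.sum_congr rfl (fun y _ => by unfold Tt; ring)
  have hBpos : 0 < B r x := by
    rw [hBsum]
    apply Finset.sum_pos' (fun i _ => hTnn i)
    refine ⟨x, ?_, ?_⟩
    · rw [hS, Finset.mem_Icc]; unfold upperHalf; omega
    · unfold Tt
      have h1 : (0:ℝ) < (Nat.choose (2*x) x : ℝ) := by
        exact_mod_cast Nat.choose_pos (by omega)
      have h2 : (0:ℝ) < (Nat.choose x (x-x) : ℝ) := by
        simp [Nat.sub_self]
      positivity
  set FU : Finset ℕ := S.filter (fun y : ℕ => (θ+ε)*(x:ℝ) < (y:ℝ)) with hFU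
  set FL : Finset ℕ := S.filter (fun y : ℕ => (y:ℝ) < (θ-ε)*(x:ℝ)) with hFL
  -- upper tail pointwise bound
  set m : ℕ := ⌈(θ + ε/2) * x⌉₊ with hm
  have hmR : ((θ + ε/2) * x : ℝ) ≤ m := Nat.le_ceil _
  have hmR' : (m:ℝ) < (θ + ε/2) * x + 1 := Nat.ceil_lt_add_one (by positivity)
  have hDle : (D:ℝ) ≤ ε * x / 2 := Nat.floor_le (by positivity)
  have hUbound : ∀ y ∈ FU, Tt r x y ≤ qm^(D-1) * B r x := by
    intro y hy
    rw [hFU, Finset.mem_filter, hS, Finset.mem_Icc] at hy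
    obtain ⟨⟨hy1, hy2⟩, hy3⟩ := hy
    have hmy : m ≤ y := by
      rw [hm]
      apply Nat.ceil_le.mpr
      linarith [hy3, hεx]
    have hstep : ∀ z, m ≤ z → z < x → Tt r x (z+1) ≤ qu * Tt r x z := by
      intro z hz1 hz2
      have hzR : ((θ + ε/2) * x : ℝ) ≤ z := le_trans hmR (by exact_mod_cast hz1)
      have h2z : x ≤ 2*z := by
        have h : (x:ℝ) < 2*z := by linarith [hzR, hθx2, hεx]
        have h' : x < 2*z := by exact_mod_cast h
        omega
      exact hUpx z h2z hz2 hzR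
    have hchain := chain_up hqu0.le hstep (y - m) (by omega)
    rw [show m + (y - m) = y by omega] at hchain
    have hmS : m ∈ S := by
      rw [hS, Finset.mem_Icc]
      constructor
      · have h : (x:ℝ) < 2*m := by linarith [hmR, hθx2, hεx]
        have h' : x < 2*m := by exact_mod_cast h
        unfold upperHalf; omega
      · omega
    have hfmB : Tt r x m ≤ B r x := by
      rw [hBsum]
      exact Finset.single_le_sum (fun i _ => hTnn i) hmS
    have hexp : D - 1 ≤ y - m := by
      have hc : (m:ℝ) + D < (y:ℝ) + 1 := by linarith [hmR', hDle, hy3]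
      have h' : m + D < y + 1 := by exact_mod_cast hc
      omega
    have hpow : qu^(y-m) ≤ qm^(D-1) := by
      calc qu^(y-m) ≤ qu^(D-1) := pow_le_pow_of_le_one hqu0.le hqu1.le hexp
        _ ≤ qm^(D-1) := pow_le_pow_left₀ hqu0.le (le_max_left _ _) _
    calc Tt r x y ≤ qu^(y-m) * Tt r x m := hchain
      _ ≤ qm^(D-1) * B r x := mul_le_mul hpow hfmB (hTnn m) (by positivity)
  -- lower tail pointwise bound
  set m' : ℕ := ⌊(θ - ε/2) * x⌋₊ with hm'
  have hθε2 : (0:ℝ) < θ - ε/2 := by linarith [hθc, hεc, hc1]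
  have hm'R : ((m':ℕ):ℝ) ≤ (θ - ε/2) * x := Nat.floor_le (by positivity)
  have hm'R' : ((θ - ε/2) * x : ℝ) < m' + 1 := Nat.lt_floor_add_one _
  have hLbound : ∀ y ∈ FL, Tt r x y ≤ qm^(D-1) * B r x := by
    intro y hy
    rw [hFL, Finset.mem_filter, hS, Finset.mem_Icc] at hy
    obtain ⟨⟨hy1, hy2⟩, hy3⟩ := hy
    have hym : y ≤ m' := by
      rw [hm']
      apply Nat.le_floor
      linarith [hy3, hεx]
    have hstep : ∀ z, upperHalf x ≤ z → z+1 ≤ m' → Tt r x z ≤ qd * Tt r x (z+1) := by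
      intro z hz1 hz2
      have h2z : x ≤ 2*z := by unfold upperHalf at hz1; omega
      have hzc : ((z:ℕ):ℝ) + 1 ≤ m' := by exact_mod_cast hz2
      have hzR : (z:ℝ) < (θ - ε/2) * x := by linarith
      exact hDnx z h2z hzR
    have hchain := chain_down hqd0.le hstep (m' - y) (by omega)
    rw [show m' - (m' - y) = y by omega] at hchain
    have hm'S : m' ∈ S := by
      rw [hS, Finset.mem_Icc]
      refine ⟨by omega, ?_⟩
      have h : (m':ℝ) ≤ (x:ℝ) := by linarith [hm'R, hθx1, hεx]
      exact_mod_cast h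
    have hfmB : Tt r x m' ≤ B r x := by
      rw [hBsum]
      exact Finset.single_le_sum (fun i _ => hTnn i) hm'S
    have hexp : D - 1 ≤ m' - y := by
      have hc : (y:ℝ) + D < (m':ℝ) + 1 := by linarith [hm'R', hDle, hy3]
      have h' : y + D < m' + 1 := by exact_mod_cast hc
      omega
    have hpow : qd^(m'-y) ≤ qm^(D-1) := by
      calc qd^(m'-y) ≤ qd^(D-1) := pow_le_pow_of_le_one hqd0.le hqd1.le hexp
        _ ≤ qm^(D-1) := pow_le_pow_left₀ hqd0.le (le_max_right _ _) _
    calc Tt r x y ≤ qd^(m'-y) * Tt r x m' := hchain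
      _ ≤ qm^(D-1) * B r x := mul_le_mul hpow hfmB (hTnn m') (by positivity)
  -- tail sums
  have hcardS : (S.card : ℝ) ≤ (x:ℝ) + 1 := by
    have h : S.card ≤ x + 1 := by rw [hS, Nat.card_Icc]; omega
    exact_mod_cast h
  have hFarU : ∑ y ∈ FU, Tt r x y ≤ ((x:ℝ)+1) * (qm^(D-1) * B r x) := by
    calc ∑ y ∈ FU, Tt r x y ≤ FU.card • (qm^(D-1) * B r x) :=
          Finset.sum_le_card_nsmul _ _ _ hUbound
      _ = (FU.card : ℝ) * (qm^(D-1) * B r x) := by rw [nsmul_eq_mul]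
      _ ≤ ((x:ℝ)+1) * (qm^(D-1) * B r x) := by
          apply mul_le_mul_of_nonneg_right _ (by positivity)
          refine le_trans ?_ hcardS
          exact_mod_cast Finset.card_filter_le _ _
  have hFarL : ∑ y ∈ FL, Tt r x y ≤ ((x:ℝ)+1) * (qm^(D-1) * B r x) := by
    calc ∑ y ∈ FL, Tt r x y ≤ FL.card • (qm^(D-1) * B r x) :=
          Finset.sum_le_card_nsmul _ _ _ hLbound
      _ = (FL.card : ℝ) * (qm^(D-1) * B r x) := by rw [nsmul_eq_mul]
      _ ≤ ((x:ℝ)+1) * (qm^(D-1) * B r x) := by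
          apply mul_le_mul_of_nonneg_right _ (by positivity)
          refine le_trans ?_ hcardS
          exact_mod_cast Finset.card_filter_le _ _
  -- splitting the weighted sum
  set P : ℕ → Prop := fun y : ℕ => |(y:ℝ) - θ*x| ≤ ε*x with hP
  have hsplit : ∑ y ∈ S, |(y:ℝ) - θ*x| * Tt r x y
      = (∑ y ∈ S.filter P, |(y:ℝ) - θ*x| * Tt r x y)
        + ∑ y ∈ S.filter (fun y => ¬ P y), |(y:ℝ) - θ*x| * Tt r x y :=
    (Finset.sum_filter_add_sum_filter_not S P _).symm
  have hNear : ∑ y ∈ S.filter P, |(y:ℝ) - θ*x| * Tt r x y ≤ ε*x * B r x := by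
    calc ∑ y ∈ S.filter P, |(y:ℝ) - θ*x| * Tt r x y
        ≤ ∑ y ∈ S.filter P, ε*x * Tt r x y := by
          apply Finset.sum_le_sum
          intro i hi
          rw [Finset.mem_filter] at hi
          exact mul_le_mul_of_nonneg_right hi.2 (hTnn i)
      _ ≤ ∑ y ∈ S, ε*x * Tt r x y := by
          apply Finset.sum_le_sum_of_subset_of_nonneg (Finset.filter_subset _ _)
          intro i _ _
          have := hTnn i
          positivity
      _ = ε*x * B r x := by rw [hBsum, Finset.mul_sum]
  have hsub : S.filter (fun y => ¬ P y) ⊆ FU ∪ FL := by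
    intro y hy
    rw [Finset.mem_filter] at hy
    obtain ⟨hyS, hyP⟩ := hy
    simp only [hP] at hyP
    push_neg at hyP
    rw [Finset.mem_union, hFU, hFL, Finset.mem_filter, Finset.mem_filter]
    rcases lt_abs.mp hyP with h | h
    · left; exact ⟨hyS, by linarith [h]⟩
    · right; exact ⟨hyS, by linarith [h]⟩
  have hdisj : Disjoint FU FL := by
    rw [Finset.disjoint_left]
    intro y hyU hyL
    rw [hFU, Finset.mem_filter] at hyU
    rw [hFL, Finset.mem_filter] at hyL
    have h1 := hyU.2
    have h2 := hyL.2
    linarith [h1, h2, hεx]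
  have hFar : ∑ y ∈ S.filter (fun y => ¬ P y), |(y:ℝ) - θ*x| * Tt r x y
      ≤ (x:ℝ) * (2*(((x:ℝ)+1) * (qm^(D-1) * B r x))) := by
    have habsx : ∀ y ∈ S, |(y:ℝ) - θ*x| ≤ (x:ℝ) := by
      intro y hy
      rw [hS, Finset.mem_Icc] at hy
      have hyx : (y:ℝ) ≤ x := by exact_mod_cast hy.2
      have hy0 : (0:ℝ) ≤ y := by positivity
      rw [abs_le]
      constructor
      · linarith [hθx1]
      · linarith [hθx0]
    calc ∑ y ∈ S.filter (fun y => ¬ P y), |(y:ℝ) - θ*x| * Tt r x y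
        ≤ ∑ y ∈ S.filter (fun y => ¬ P y), (x:ℝ) * Tt r x y := by
          apply Finset.sum_le_sum
          intro i hi
          exact mul_le_mul_of_nonneg_right
            (habsx i (Finset.mem_of_mem_filter i hi)) (hTnn i)
      _ = (x:ℝ) * ∑ y ∈ S.filter (fun y => ¬ P y), Tt r x y := by
          rw [Finset.mul_sum]
      _ ≤ (x:ℝ) * ∑ y ∈ FU ∪ FL, Tt r x y := by
          apply mul_le_mul_of_nonneg_left _ (by linarith)
          exact Finset.sum_le_sum_of_subset_of_nonneg hsub (fun i _ _ => hTnn i)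
      _ = (x:ℝ) * ((∑ y ∈ FU, Tt r x y) + ∑ y ∈ FL, Tt r x y) := by
          rw [Finset.sum_union hdisj]
      _ ≤ (x:ℝ) * (2*(((x:ℝ)+1) * (qm^(D-1) * B r x))) := by
          apply mul_le_mul_of_nonneg_left _ (by linarith)
          linarith [hFarU, hFarL]
  -- final combination
  have hdiffeq : A r x - θ*((x:ℝ)*B r x) = ∑ y ∈ S, ((y:ℝ) - θ*x) * Tt r x y := by
    rw [hAsum, hBsum, Finset.mul_sum, Finset.mul_sum, ← Finset.sum_sub_distrib]
    exact Finset.sum_congr rfl fun y _ => by ring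
  have habs2 : |A r x - θ*((x:ℝ)*B r x)| ≤ ∑ y ∈ S, |(y:ℝ) - θ*x| * Tt r x y := by
    rw [hdiffeq]
    calc |∑ y ∈ S, ((y:ℝ) - θ*x) * Tt r x y| ≤ ∑ y ∈ S, |((y:ℝ) - θ*x) * Tt r x y| :=
          Finset.abs_sum_le_sum_abs _ _
      _ = ∑ y ∈ S, |(y:ℝ) - θ*x| * Tt r x y :=
          Finset.sum_congr rfl fun y _ => by rw [abs_mul, abs_of_nonneg (hTnn y)]
  have hxB : 0 < (x:ℝ) * B r x := mul_pos (by linarith) hBpos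
  have htail2 : (x:ℝ) * (2*(((x:ℝ)+1) * (qm^(D-1) * B r x))) ≤ ε * ((x:ℝ) * B r x) := by
    have h := mul_le_mul_of_nonneg_left htx
      (show (0:ℝ) ≤ 2*((x:ℝ) * B r x) by positivity)
    linarith [h]
  have heq : A r x/((x:ℝ)*B r x) - θ = (A r x - θ*((x:ℝ)*B r x))/((x:ℝ)*B r x) := by
    field_simp
  rw [heq, abs_div, abs_of_pos hxB, div_le_iff₀ hxB]
  calc |A r x - θ*((x:ℝ)*B r x)| ≤ ∑ y ∈ S, |(y:ℝ) - θ*x| * Tt r x y := habs2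
    _ = _ + _ := hsplit
    _ ≤ ε*x * B r x + (x:ℝ) * (2*(((x:ℝ)+1) * (qm^(D-1) * B r x))) := add_le_add hNear hFar
    _ ≤ ε*x * B r x + ε * ((x:ℝ) * B r x) := by linarith [htail2]
    _ = 2*ε*((x:ℝ)*B r x) := by ring

theorem mean_of_limit_posterior (u : ℝ) (hu : u ∈ Set.Ioo (0 : ℝ) 1) :
    Tendsto (fun x : ℕ => A (rho u) x / ((x : ℝ) * B (rho u) x)) atTop
      (nhds (1 / (1 + u))) := by
  rw [Metric.tendsto_atTop]
  intro ep hep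
  have hc₀ : 0 < (1-u)/(1+u) := div_pos (by linarith [hu.2]) (by linarith [hu.1])
  have hε0 : 0 < min (ep/3) ((1-u)/(1+u)/2) := lt_min (by linarith) (by linarith)
  have hεc : min (ep/3) ((1-u)/(1+u)/2) < (1-u)/(1+u) :=
    lt_of_le_of_lt (min_le_right _ _) (by linarith)
  have h := main_est hu hε0 hεc
  rw [eventually_atTop] at h
  obtain ⟨N, hN⟩ := h
  refine ⟨N, fun n hn => ?_⟩
  rw [Real.dist_eq]
  have h1 := hN n hn
  have h3 : min (ep/3) ((1-u)/(1+u)/2) ≤ ep/3 := min_le_left _ _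
  linarith
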